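/- Let k ≥ 2 and let v ∈ ℂ^k ⊗ ℂ^k ≅ ℂ^{k²} be a unit antisymmetric vector. Then for every real ε with 0 ≤ ε ≤ 1, the matrix B = P_sym^{k,2} + ε·v v^* ∈ M_{k²}(ℂ) is positive under partial transpose (PPT): both B and its right partial transpose B^Γ are positive semidefinite. -/

import Mathlib

set_option maxHeartbeats 2000000

open Matrix Finset
open scoped ComplexOrder

local notation "conj'" => starRingEnd ℂ

/-- The flip operator on ℂ^k ⊗ ℂ^k. -/
noncomputable def flipOp (k : ℕ) : Matrix (Fin k × Fin k) (Fin k × Fin k) ℂ :=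
  Matrix.of fun p q => if p.1 = q.2 ∧ p.2 = q.1 then 1 else 0

/-- Orthogonal projection onto the symmetric subspace of ℂ^k ⊗ ℂ^k. -/
noncomputable def psym (k : ℕ) : Matrix (Fin k × Fin k) (Fin k × Fin k) ℂ :=
  (1 / 2 : ℂ) • (1 + flipOp k)

/-- The right partial transpose: (X^Γ)_{(i,j),(k',l)} = X_{(i,l),(k',j)}. -/
def rpt {k : ℕ} (X : Matrix (Fin k × Fin k) (Fin k × Fin k) ℂ) :
    Matrix (Fin k × Fin k) (Fin k × Fin k) ℂ :=
  Matrix.of fun p q => X (p.1, q.2) (q.1, p.2)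


/-- Cauchy–Schwarz for complex sums. -/
lemma PPTaux_cs_sum {n : ℕ} (a b : Fin n → ℂ) :
    Complex.normSq (∑ i, a i * b i) ≤ (∑ i, Complex.normSq (a i)) * (∑ i, Complex.normSq (b i)) := by
  let A : EuclideanSpace ℂ (Fin n) := WithLp.toLp 2 (fun i => conj' (a i))
  let B : EuclideanSpace ℂ (Fin n) := WithLp.toLp 2 (fun i => b i)
  have h1 : (inner ℂ A B : ℂ) = ∑ i, a i * b i := by
    simp [PiLp.inner_apply, A, B, RCLike.inner_apply, mul_comm]
  have h2 := norm_inner_le_norm (𝕜 := ℂ) A B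
  have h3 : ‖A‖ ^ 2 = ∑ i, Complex.normSq (a i) := by
    rw [EuclideanSpace.norm_eq, Real.sq_sqrt (by positivity)]
    simp [A, Complex.sq_norm]
  have h4 : ‖B‖ ^ 2 = ∑ i, Complex.normSq (b i) := by
    rw [EuclideanSpace.norm_eq, Real.sq_sqrt (by positivity)]
    simp [B, Complex.sq_norm]
  have h5 : Complex.normSq (∑ i, a i * b i) = ‖(inner ℂ A B : ℂ)‖ ^ 2 := by
    rw [h1]; rw [← Complex.sq_norm]
  rw [h5, ← h3, ← h4]
  calc ‖(inner ℂ A B : ℂ)‖ ^ 2 ≤ (‖A‖ * ‖B‖) ^ 2 := by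
        apply sq_le_sq' <;> nlinarith [norm_nonneg (inner ℂ A B : ℂ), norm_nonneg A, norm_nonneg B]
    _ = ‖A‖ ^2 * ‖B‖ ^ 2 := by ring

/-- Two-vector Bessel inequality. -/
lemma PPTaux_bessel2 {n : ℕ} (a b u : EuclideanSpace ℂ (Fin n))
    (hab : (inner ℂ a b : ℂ) = 0) (ha : ‖a‖ = 1) (hb : ‖b‖ = 1) :
    ‖(inner ℂ a u : ℂ)‖ ^ 2 + ‖(inner ℂ b u : ℂ)‖ ^ 2 ≤ ‖u‖ ^ 2 := by
  have hba : (inner ℂ b a : ℂ) = 0 := by rw [← inner_conj_symm]; simp [hab]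
  have haa : (inner ℂ a a : ℂ) = 1 := by
    rw [inner_self_eq_norm_sq_to_K, ha]; norm_num
  have hbb : (inner ℂ b b : ℂ) = 1 := by
    rw [inner_self_eq_norm_sq_to_K, hb]; norm_num
  have horth : Orthonormal ℂ ![a, b] := by
    rw [orthonormal_iff_ite]
    intro i j
    fin_cases i <;> fin_cases j
    · simpa using haa
    · simpa using hab
    · simpa using hba
    · simpa using hbb
  have := horth.sum_inner_products_le (s := Finset.univ) u
  simpa [Fin.sum_univ_two] using this

/-- For an antisymmetric matrix `W`, `2‖Wz‖² ≤ ‖W‖_F² ‖z‖²`. -/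
lemma PPTaux_key {n : ℕ} (W : Matrix (Fin n) (Fin n) ℂ) (hW : ∀ i j, W j i = -W i j)
    (z : Fin n → ℂ) :
    2 * (∑ i, Complex.normSq (W.mulVec z i)) ≤
      (∑ i, ∑ j, Complex.normSq (W i j)) * ∑ i, Complex.normSq (z i) := by
  classical
  set y := W.mulVec z with hy
  set Y := ∑ i, Complex.normSq (y i) with hYdef
  set Z := ∑ i, Complex.normSq (z i) with hZdef
  set S := ∑ i, ∑ j, Complex.normSq (W i j) with hSdef
  have hYnn : 0 ≤ Y := Finset.sum_nonneg fun _ _ => Complex.normSq_nonneg _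
  have hZnn : 0 ≤ Z := Finset.sum_nonneg fun _ _ => Complex.normSq_nonneg _
  have hSnn : 0 ≤ S := Finset.sum_nonneg fun _ _ =>
    Finset.sum_nonneg fun _ _ => Complex.normSq_nonneg _
  by_cases hY0 : Y = 0
  · rw [hY0]; nlinarith [mul_nonneg hSnn hZnn]
  have hYpos : 0 < Y := lt_of_le_of_ne hYnn (Ne.symm hY0)
  have hZpos : 0 < Z := by
    rcases lt_or_eq_of_le hZnn with h | h
    · exact h
    · exfalso
      have hz : ∀ i, z i = 0 := by
        intro i
        have := (Finset.sum_eq_zero_iff_of_nonneg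
          (fun i _ => Complex.normSq_nonneg (z i))).mp h.symm i (Finset.mem_univ i)
        exact Complex.normSq_eq_zero.mp this
      apply hY0
      rw [hYdef]
      apply Finset.sum_eq_zero
      intro i _
      have : y i = 0 := by
        rw [hy, Matrix.mulVec, dotProduct]
        apply Finset.sum_eq_zero
        intro j _
        rw [hz j, mul_zero]
      rw [this]; simp
  -- F1 : bilinear orthogonality
  have F1 : ∑ i, z i * y i = 0 := by
    have h1 : ∑ i, z i * y i = ∑ i, ∑ j, W i j * z i * z j := by
      apply Finset.sum_congr rfl
      intro i _
      rw [hy, Matrix.mulVec, dotProduct, Finset.mul_sum]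
      apply Finset.sum_congr rfl
      intro j _
      ring
    have h2 : ∑ i, ∑ j, W i j * z i * z j = -∑ i, ∑ j, W i j * z i * z j := by
      calc ∑ i, ∑ j, W i j * z i * z j = ∑ j, ∑ i, W i j * z i * z j := Finset.sum_comm
        _ = ∑ i, ∑ j, -(W i j * z i * z j) := by
            apply Finset.sum_congr rfl; intro i _
            apply Finset.sum_congr rfl; intro j _
            rw [hW i j]; ring
        _ = -∑ i, ∑ j, W i j * z i * z j := by
            simp [Finset.sum_neg_distrib]
    rw [h1]
    linear_combination h2 / 2
  -- the auxiliary vector W (conj y)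
  set g := W.mulVec (fun j => conj' (y j)) with hg
  -- F2
  have F2 : ∑ i, z i * g i = -(Y : ℂ) := by
    have h1 : ∑ i, z i * g i = ∑ j, conj' (y j) * ∑ i, W i j * z i := by
      rw [hg]
      calc ∑ i, z i * (W.mulVec (fun j => conj' (y j))) i
          = ∑ i, ∑ j, (W i j * conj' (y j)) * z i := by
            apply Finset.sum_congr rfl; intro i _
            rw [Matrix.mulVec, dotProduct, Finset.mul_sum]
            apply Finset.sum_congr rfl; intro j _; ring
        _ = ∑ j, ∑ i, (W i j * conj' (y j)) * z i := Finset.sum_comm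
        _ = ∑ j, conj' (y j) * ∑ i, W i j * z i := by
            apply Finset.sum_congr rfl; intro j _
            rw [Finset.mul_sum]
            apply Finset.sum_congr rfl; intro i _; ring
    have h2 : ∀ j, ∑ i, W i j * z i = -y j := by
      intro j
      have : ∑ i, W i j * z i = ∑ i, -(W j i * z i) := by
        apply Finset.sum_congr rfl; intro i _
        rw [hW i j]; ring
      rw [this, Finset.sum_neg_distrib]
      congr 1
    rw [h1]
    have : ∑ j, conj' (y j) * -y j = -(Y : ℂ) := by
      rw [hYdef]
      push_cast
      rw [← Finset.sum_neg_distrib]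
      apply Finset.sum_congr rfl
      intro j _
      rw [mul_neg, Complex.normSq_eq_conj_mul_self]
    rw [← this]
    apply Finset.sum_congr rfl
    intro j _
    rw [h2 j]
  -- F3 : Cauchy-Schwarz
  set G := ∑ i, Complex.normSq (g i) with hGdef
  have F3 : Y ^ 2 ≤ Z * G := by
    have := PPTaux_cs_sum z g
    rw [F2, Complex.normSq_neg, Complex.normSq_ofReal] at this
    rw [sq]
    exact this
  -- Bessel step
  have hZs : (0:ℝ) < Real.sqrt Z := Real.sqrt_pos.mpr hZpos
  have hYs : (0:ℝ) < Real.sqrt Y := Real.sqrt_pos.mpr hYpos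
  let A : EuclideanSpace ℂ (Fin n) := WithLp.toLp 2 (fun i => z i)
  let B : EuclideanSpace ℂ (Fin n) := WithLp.toLp 2 (fun i => conj' (y i))
  have hnA : ‖A‖ = Real.sqrt Z := by
    rw [EuclideanSpace.norm_eq]
    congr 1
    rw [hZdef]
    apply Finset.sum_congr rfl
    intro i _
    have : ‖A i‖ = ‖z i‖ := rfl
    rw [this, Complex.sq_norm]
  have hnB : ‖B‖ = Real.sqrt Y := by
    rw [EuclideanSpace.norm_eq]
    congr 1
    rw [hYdef]
    apply Finset.sum_congr rfl
    intro i _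
    have : ‖B i‖ = ‖conj' (y i)‖ := rfl
    rw [this, Complex.sq_norm, Complex.normSq_conj]
  set c : ℂ := (((Real.sqrt Z)⁻¹ : ℝ) : ℂ) with hc
  set d : ℂ := (((Real.sqrt Y)⁻¹ : ℝ) : ℂ) with hd
  let a : EuclideanSpace ℂ (Fin n) := c • A
  let b : EuclideanSpace ℂ (Fin n) := d • B
  have hna : ‖a‖ = 1 := by
    rw [show a = c • A from rfl, norm_smul, hnA, hc]
    simp [abs_of_pos hZs]
    field_simp
  have hnb : ‖b‖ = 1 := by
    rw [show b = d • B from rfl, norm_smul, hnB, hd]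
    simp [abs_of_pos hYs]
    field_simp
  have hABinner : (inner ℂ A B : ℂ) = 0 := by
    rw [PiLp.inner_apply]
    have : ∀ i : Fin n, (inner ℂ (A i) (B i) : ℂ) = conj' (z i * y i) := by
      intro i
      rw [RCLike.inner_apply]
      simp [A, B, mul_comm]
    rw [Finset.sum_congr rfl (fun i _ => this i), ← map_sum, F1, map_zero]
  have habinner : (inner ℂ a b : ℂ) = 0 := by
    rw [show a = c • A from rfl, show b = d • B from rfl, inner_smul_left, inner_smul_right,
      hABinner]
    ring
  have hbes : Y / Z + G / Y ≤ S := by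
    have hrow : ∀ i : Fin n, Complex.normSq (y i) / Z + Complex.normSq (g i) / Y
        ≤ ∑ j, Complex.normSq (W i j) := by
      intro i
      let u : EuclideanSpace ℂ (Fin n) := WithLp.toLp 2 (fun j => conj' (W i j))
      have hAu : (inner ℂ A u : ℂ) = conj' (y i) := by
        rw [PiLp.inner_apply]
        have : ∀ j : Fin n, (inner ℂ (A j) (u j) : ℂ) = conj' (W i j * z j) := by
          intro j
          rw [RCLike.inner_apply]
          simp [A, u]
        rw [Finset.sum_congr rfl (fun j _ => this j), ← map_sum]
        rfl
      have hBu : (inner ℂ B u : ℂ) = conj' (g i) := by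
        rw [PiLp.inner_apply]
        have : ∀ j : Fin n, (inner ℂ (B j) (u j) : ℂ) = conj' (W i j * conj' (y j)) := by
          intro j
          rw [RCLike.inner_apply]
          simp [B, u]
        rw [Finset.sum_congr rfl (fun j _ => this j), ← map_sum]
        rfl
      have hnu : ‖u‖ ^ 2 = ∑ j, Complex.normSq (W i j) := by
        rw [EuclideanSpace.norm_eq,
          Real.sq_sqrt (Finset.sum_nonneg fun _ _ => sq_nonneg _)]
        apply Finset.sum_congr rfl
        intro j _
        have : ‖u j‖ = ‖conj' (W i j)‖ := rfl
        rw [this, Complex.sq_norm, Complex.normSq_conj]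
      have hb2 := PPTaux_bessel2 a b u habinner hna hnb
      have hau : (inner ℂ a u : ℂ) = conj' c * conj' (y i) := by
        rw [show a = c • A from rfl, inner_smul_left, hAu]
      have hbu : (inner ℂ b u : ℂ) = conj' d * conj' (g i) := by
        rw [show b = d • B from rfl, inner_smul_left, hBu]
      rw [hau, hbu, hnu] at hb2
      have e1 : ‖conj' c * conj' (y i)‖ ^ 2 = Complex.normSq (y i) / Z := by
        rw [norm_mul, mul_pow]
        have : ‖conj' c‖ ^ 2 = Z⁻¹ := by
          rw [hc]
          simp [Complex.norm_real, abs_of_pos hZs]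
          exact Real.sq_sqrt hZnn
        rw [this]
        have : ‖conj' (y i)‖ ^ 2 = Complex.normSq (y i) := by
          have h : ‖conj' (y i)‖ = ‖conj' (y i)‖ := rfl
          rw [h, Complex.sq_norm, Complex.normSq_conj]
        rw [this]
        ring
      have e2 : ‖conj' d * conj' (g i)‖ ^ 2 = Complex.normSq (g i) / Y := by
        rw [norm_mul, mul_pow]
        have : ‖conj' d‖ ^ 2 = Y⁻¹ := by
          rw [hd]
          simp [Complex.norm_real, abs_of_pos hYs]
          exact Real.sq_sqrt hYnn
        rw [this]
        have : ‖conj' (g i)‖ ^ 2 = Complex.normSq (g i) := by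
          have h : ‖conj' (g i)‖ = ‖conj' (g i)‖ := rfl
          rw [h, Complex.sq_norm, Complex.normSq_conj]
        rw [this]
        ring
      rw [e1, e2] at hb2
      exact hb2
    calc Y / Z + G / Y
        = ∑ i, (Complex.normSq (y i) / Z + Complex.normSq (g i) / Y) := by
          rw [Finset.sum_add_distrib, ← Finset.sum_div, ← Finset.sum_div, ← hYdef, ← hGdef]
      _ ≤ ∑ i, ∑ j, Complex.normSq (W i j) := Finset.sum_le_sum fun i _ => hrow i
      _ = S := rfl
  -- combine
  have hZ0 : Z ≠ 0 := ne_of_gt hZpos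
  have hY0' : Y ≠ 0 := ne_of_gt hYpos
  rw [div_add_div _ _ hZ0 hY0', div_le_iff₀ (by positivity)] at hbes
  have h7 : (2 * Y) * Y ≤ (S * Z) * Y := by nlinarith
  exact le_of_mul_le_mul_right h7 hYpos

lemma PPTaux_flip_mulVec {k : ℕ} (x : Fin k × Fin k → ℂ) :
    (flipOp k).mulVec x = fun p => x (p.2, p.1) := by
  funext p
  rw [Matrix.mulVec, dotProduct]
  have h : ∀ q : Fin k × Fin k, (p.1 = q.2 ∧ p.2 = q.1) ↔ q = (p.2, p.1) := by
    intro q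
    constructor
    · rintro ⟨a, b⟩; exact Prod.ext b.symm a.symm
    · rintro rfl; exact ⟨rfl, rfl⟩
  simp [flipOp, h]

lemma PPTaux_re_cross_bound (a b : ℂ) :
    -((Complex.normSq a + Complex.normSq b) / 2) ≤ (conj' a * b).re := by
  have h := Complex.normSq_nonneg (a + b)
  rw [Complex.normSq_add] at h
  have : (a * conj' b).re = (conj' a * b).re := by
    simp [Complex.mul_re, Complex.conj_re, Complex.conj_im]
  linarith

lemma PPTaux_Aentry {k : ℕ} (v : Fin k × Fin k → ℂ) (ε : ℝ) (p q : Fin k × Fin k) :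
    (psym k + (ε : ℂ) • Matrix.vecMulVec v (star v)) p q
      = (1/2 : ℂ) * ((if p = q then 1 else 0) + (if p.1 = q.2 ∧ p.2 = q.1 then 1 else 0))
        + (ε : ℂ) * (v p * conj' (v q)) := by
  simp [psym, flipOp, Matrix.one_apply, Matrix.vecMulVec_apply, Matrix.add_apply,
    Matrix.smul_apply]
  split_ifs <;> ring

lemma PPTaux_Aherm {k : ℕ} (v : Fin k × Fin k → ℂ) (ε : ℝ) :
    (psym k + (ε : ℂ) • Matrix.vecMulVec v (star v)).IsHermitian := by
  rw [Matrix.IsHermitian, ← Matrix.ext_iff]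
  intro p q
  rw [Matrix.conjTranspose_apply, PPTaux_Aentry, PPTaux_Aentry]
  have h1 : (q = p) ↔ (p = q) := eq_comm
  have h2 : (q.1 = p.2 ∧ q.2 = p.1) ↔ (p.1 = q.2 ∧ p.2 = q.1) := by
    constructor <;> rintro ⟨a, b⟩ <;> exact ⟨b.symm, a.symm⟩
  simp only [Complex.star_def, map_add, _root_.map_mul, apply_ite conj', _root_.map_one,
    map_zero, h1, h2, Complex.conj_conj, map_div₀, Complex.conj_ofReal]
  have : conj' 2 = (2:ℂ) := map_ofNat conj' 2
  rw [this]
  ring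

lemma PPTaux_rpt_isHermitian {k : ℕ} {X : Matrix (Fin k × Fin k) (Fin k × Fin k) ℂ}
    (h : X.IsHermitian) : (rpt X).IsHermitian := by
  rw [Matrix.IsHermitian, ← Matrix.ext_iff]
  intro p q
  rw [Matrix.conjTranspose_apply]
  show star (X (q.1, p.2) (p.1, q.2)) = X (p.1, q.2) (q.1, p.2)
  rw [← Matrix.conjTranspose_apply, h]

lemma PPTaux_vecMulVec_quadform {n : Type*} [Fintype n] (v x : n → ℂ) :
    star x ⬝ᵥ (Matrix.vecMulVec v (star v)).mulVec x
      = ((Complex.normSq (star v ⬝ᵥ x) : ℝ) : ℂ) := by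
  set s := star v ⬝ᵥ x with hs
  have hmv : (Matrix.vecMulVec v (star v)).mulVec x = fun p => v p * s := by
    funext p
    rw [Matrix.mulVec, dotProduct, hs, dotProduct, Finset.mul_sum]
    apply Finset.sum_congr rfl
    intro q _
    rw [Matrix.vecMulVec_apply]
    ring
  rw [hmv]
  rw [show star x ⬝ᵥ (fun p => v p * s) = (∑ p, conj' (x p) * v p) * s by
    rw [dotProduct, Finset.sum_mul]; apply Finset.sum_congr rfl; intro p _;
    rw [Pi.star_apply, Complex.star_def]; ring]
  have : (∑ p, conj' (x p) * v p) = conj' s := by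
    rw [hs, dotProduct, map_sum]
    apply Finset.sum_congr rfl
    intro p _
    rw [_root_.map_mul, Pi.star_apply, Complex.star_def, Complex.conj_conj]
    ring
  rw [this, Complex.normSq_eq_conj_mul_self]

lemma PPTaux_star_dot_self {n : Type*} [Fintype n] (x : n → ℂ) :
    star x ⬝ᵥ x = ((∑ p, Complex.normSq (x p) : ℝ) : ℂ) := by
  rw [dotProduct]
  push_cast
  apply Finset.sum_congr rfl
  intro p _
  rw [Pi.star_apply, Complex.star_def, Complex.normSq_eq_conj_mul_self]

lemma PPTaux_sum4_reorder {α β : Type*} [Fintype α] [Fintype β] (T : α → β → α → β → ℂ) :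
    ∑ i, ∑ j, ∑ kk, ∑ l, T i j kk l = ∑ j, ∑ l, ∑ i, ∑ kk, T i j kk l := by
  rw [Finset.sum_comm]
  apply Finset.sum_congr rfl; intro j _
  calc ∑ i, ∑ kk, ∑ l, T i j kk l = ∑ i, ∑ l, ∑ kk, T i j kk l := by
        apply Finset.sum_congr rfl; intro i _; exact Finset.sum_comm
    _ = ∑ l, ∑ i, ∑ kk, T i j kk l := Finset.sum_comm

lemma PPTaux_rpt_decomp {k : ℕ} (v : Fin k × Fin k → ℂ) (ε : ℝ) :
    rpt (psym k + (ε : ℂ) • Matrix.vecMulVec v (star v))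
      = (1/2 : ℂ) • (1 : Matrix (Fin k × Fin k) (Fin k × Fin k) ℂ)
        + (1/2 : ℂ) • Matrix.vecMulVec (fun p : Fin k × Fin k => if p.1 = p.2 then (1:ℂ) else 0)
            (star (fun p : Fin k × Fin k => if p.1 = p.2 then (1:ℂ) else 0))
        + (ε : ℂ) • Matrix.of (fun p q : Fin k × Fin k => v (p.1, q.2) * conj' (v (q.1, p.2))) := by
  ext p q
  rw [show (rpt (psym k + (ε : ℂ) • Matrix.vecMulVec v (star v))) p q
    = (psym k + (ε : ℂ) • Matrix.vecMulVec v (star v)) (p.1, q.2) (q.1, p.2) from rfl, PPTaux_Aentry]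
  have h1 : ((p.1, q.2) = ((q.1, p.2) : Fin k × Fin k)) ↔ p = q := by
    constructor
    · intro h
      have ha := congrArg Prod.fst h
      have hb := congrArg Prod.snd h
      simp at ha hb
      exact Prod.ext ha hb.symm
    · rintro rfl; rfl
  have h2 : ((p.1 = p.2 ∧ q.2 = q.1) ↔ (p.1 = p.2 ∧ q.1 = q.2)) := by
    constructor <;> rintro ⟨a, b⟩ <;> exact ⟨a, b.symm⟩
  simp only [Matrix.add_apply, Matrix.smul_apply, Matrix.one_apply, Matrix.vecMulVec_apply,
    Matrix.of_apply, Pi.star_apply, h1]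
  simp only [h2]
  have h3 : (if p.1 = p.2 ∧ q.1 = q.2 then (1:ℂ) else 0)
      = (if p.1 = p.2 then (1:ℂ) else 0) * star (if q.1 = q.2 then (1:ℂ) else 0) := by
    split_ifs <;> simp_all
  rw [h3]
  simp only [smul_eq_mul]
  ring

theorem psym_plus_antisym_PPT (k : ℕ) (hk : 2 ≤ k) (v : Fin k × Fin k → ℂ)
    (hv : ∑ p, Complex.normSq (v p) = 1)
    (hanti : (flipOp k).mulVec v = -v)
    (ε : ℝ) (hε0 : 0 ≤ ε) (hε : ε ≤ 1) :
    (psym k + (ε : ℂ) • Matrix.vecMulVec v (star v)).PosSemidef ∧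
    (rpt (psym k + (ε : ℂ) • Matrix.vecMulVec v (star v))).PosSemidef := by
  have hvanti : ∀ p : Fin k × Fin k, v (p.2, p.1) = -v p := by
    intro p
    have := congrFun hanti p
    rw [PPTaux_flip_mulVec] at this
    simpa using this
  constructor
  · refine .of_dotProduct_mulVec_nonneg (PPTaux_Aherm v ε) fun x => ?_
    have hsplit : star x ⬝ᵥ (psym k + (ε : ℂ) • Matrix.vecMulVec v (star v)) *ᵥ x
        = (1/2 : ℂ) * (star x ⬝ᵥ x) + (1/2 : ℂ) * (star x ⬝ᵥ (flipOp k).mulVec x)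
          + (ε : ℂ) * (star x ⬝ᵥ (Matrix.vecMulVec v (star v)).mulVec x) := by
      rw [Matrix.add_mulVec, dotProduct_add, psym, Matrix.smul_mulVec, dotProduct_smul,
        Matrix.add_mulVec, Matrix.one_mulVec, dotProduct_add, Matrix.smul_mulVec,
        dotProduct_smul]
      simp only [smul_eq_mul]
      ring
    set Sx := ∑ p, Complex.normSq (x p) with hSx
    have hSxnn : 0 ≤ Sx := Finset.sum_nonneg fun _ _ => Complex.normSq_nonneg _
    have h1 : star x ⬝ᵥ x = (Sx : ℂ) := PPTaux_star_dot_self x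
    set TF := star x ⬝ᵥ (flipOp k).mulVec x with hTF
    have hTF2 : TF = ∑ p, conj' (x p) * x (p.2, p.1) := by
      rw [hTF, PPTaux_flip_mulVec, dotProduct]
      rfl
    have hTFreal : conj' TF = TF := by
      rw [hTF2, map_sum]
      rw [show (∑ p : Fin k × Fin k, conj' (conj' (x p) * x (p.2, p.1)))
        = ∑ p : Fin k × Fin k, conj' (x (p.2, p.1)) * x p by
          apply Finset.sum_congr rfl; intro p _
          rw [_root_.map_mul, Complex.conj_conj]; ring]
      exact Fintype.sum_equiv (Equiv.prodComm (Fin k) (Fin k)) _ _ (fun p => rfl)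
    have hTFre : TF = ((TF.re : ℝ) : ℂ) := (Complex.conj_eq_iff_re.mp hTFreal).symm
    have hTFlow : -Sx ≤ TF.re := by
      rw [hTF2]
      rw [Complex.re_sum]
      have hbd : ∀ p : Fin k × Fin k,
          -((Complex.normSq (x p) + Complex.normSq (x (p.2, p.1))) / 2)
            ≤ (conj' (x p) * x (p.2, p.1)).re := fun p => PPTaux_re_cross_bound _ _
      have hsum : ∑ p : Fin k × Fin k,
          -((Complex.normSq (x p) + Complex.normSq (x (p.2, p.1))) / 2) = -Sx := by
        have hsw : ∑ p : Fin k × Fin k, Complex.normSq (x (p.2, p.1)) = Sx := by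
          rw [hSx]
          exact Fintype.sum_equiv (Equiv.prodComm (Fin k) (Fin k)) _ _ (fun p => rfl)
        calc ∑ p : Fin k × Fin k,
              -((Complex.normSq (x p) + Complex.normSq (x (p.2, p.1))) / 2)
            = ∑ p : Fin k × Fin k, ((-(1/2)) * Complex.normSq (x p)
                + (-(1/2)) * Complex.normSq (x (p.2, p.1))) := by
              apply Finset.sum_congr rfl; intro p _; ring
          _ = (-(1/2)) * (∑ p : Fin k × Fin k, Complex.normSq (x p))
                + (-(1/2)) * ∑ p : Fin k × Fin k, Complex.normSq (x (p.2, p.1)) := by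
              rw [Finset.sum_add_distrib, ← Finset.mul_sum, ← Finset.mul_sum]
          _ = -Sx := by rw [hsw, ← hSx]; ring
      calc -Sx = ∑ p : Fin k × Fin k,
          -((Complex.normSq (x p) + Complex.normSq (x (p.2, p.1))) / 2) := hsum.symm
        _ ≤ _ := Finset.sum_le_sum fun p _ => hbd p
    rw [hsplit, h1, PPTaux_vecMulVec_quadform, hTFre]
    have hkey : (0:ℝ) ≤ 1/2 * Sx + 1/2 * TF.re + ε * Complex.normSq (star v ⬝ᵥ x) := by
      have := Complex.normSq_nonneg (star v ⬝ᵥ x)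
      nlinarith
    have hcast : (1/2 : ℂ) * (Sx : ℂ) + (1/2 : ℂ) * ((TF.re : ℝ) : ℂ)
        + (ε : ℂ) * ((Complex.normSq (star v ⬝ᵥ x) : ℝ) : ℂ)
        = (((1/2 * Sx + 1/2 * TF.re + ε * Complex.normSq (star v ⬝ᵥ x) : ℝ)) : ℂ) := by
      push_cast
      ring
    rw [hcast]
    exact_mod_cast hkey
  · refine .of_dotProduct_mulVec_nonneg (PPTaux_rpt_isHermitian (PPTaux_Aherm v ε)) fun x => ?_
    rw [PPTaux_rpt_decomp]
    set w : Fin k × Fin k → ℂ := fun p => if p.1 = p.2 then (1:ℂ) else 0 with hw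
    set Mv : Matrix (Fin k × Fin k) (Fin k × Fin k) ℂ :=
      Matrix.of (fun p q : Fin k × Fin k => v (p.1, q.2) * conj' (v (q.1, p.2))) with hMv
    have hsplit : star x ⬝ᵥ ((1/2 : ℂ) • (1 : Matrix (Fin k × Fin k) (Fin k × Fin k) ℂ)
          + (1/2 : ℂ) • Matrix.vecMulVec w (star w) + (ε : ℂ) • Mv) *ᵥ x
        = (1/2 : ℂ) * (star x ⬝ᵥ x)
          + (1/2 : ℂ) * (star x ⬝ᵥ (Matrix.vecMulVec w (star w)).mulVec x)
          + (ε : ℂ) * (star x ⬝ᵥ Mv.mulVec x) := by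
      rw [Matrix.add_mulVec, dotProduct_add, Matrix.add_mulVec, dotProduct_add,
        Matrix.smul_mulVec, Matrix.smul_mulVec, Matrix.smul_mulVec,
        Matrix.one_mulVec, dotProduct_smul, dotProduct_smul, dotProduct_smul]
      simp only [smul_eq_mul]
    rw [hsplit]
    set Sx := ∑ p, Complex.normSq (x p) with hSx
    have hSxnn : 0 ≤ Sx := Finset.sum_nonneg fun _ _ => Complex.normSq_nonneg _
    have h1 : star x ⬝ᵥ x = (Sx : ℂ) := PPTaux_star_dot_self x
    -- the C matrix
    set C : Fin k → Fin k → ℂ := fun j l => ∑ i, conj' (v (i, j)) * x (i, l) with hC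
    set T3 := star x ⬝ᵥ Mv.mulVec x with hT3def
    have hT3 : T3 = ∑ j, ∑ l, conj' (C l j) * C j l := by
      have e1 : T3 = ∑ p : Fin k × Fin k, ∑ q : Fin k × Fin k,
          conj' (x p) * v (p.1, q.2) * conj' (v (q.1, p.2)) * x q := by
        rw [hT3def, dotProduct]
        apply Finset.sum_congr rfl
        intro p _
        rw [Matrix.mulVec, dotProduct, Finset.mul_sum]
        apply Finset.sum_congr rfl
        intro q _
        rw [Pi.star_apply, Complex.star_def, hMv, Matrix.of_apply]
        ring
      have e2 : T3 = ∑ i, ∑ j, ∑ kk, ∑ l,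
          conj' (x (i, j)) * v (i, l) * conj' (v (kk, j)) * x (kk, l) := by
        rw [e1, Fintype.sum_prod_type]
        apply Finset.sum_congr rfl; intro i _
        apply Finset.sum_congr rfl; intro j _
        rw [Fintype.sum_prod_type]
      rw [e2, PPTaux_sum4_reorder (fun i j kk l =>
        conj' (x (i, j)) * v (i, l) * conj' (v (kk, j)) * x (kk, l))]
      apply Finset.sum_congr rfl; intro j _
      apply Finset.sum_congr rfl; intro l _
      rw [hC]
      simp only
      rw [map_sum, Finset.sum_mul_sum]
      apply Finset.sum_congr rfl; intro i _
      apply Finset.sum_congr rfl; intro kk _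
      rw [_root_.map_mul, Complex.conj_conj]
      ring
    have hT3real : conj' T3 = T3 := by
      rw [hT3]
      rw [map_sum]
      rw [show (∑ j, conj' (∑ l, conj' (C l j) * C j l))
        = ∑ j, ∑ l, conj' (C j l) * C l j by
          apply Finset.sum_congr rfl; intro j _
          rw [map_sum]
          apply Finset.sum_congr rfl; intro l _
          rw [_root_.map_mul, Complex.conj_conj]; ring]
      rw [Finset.sum_comm]
    have hT3re : T3 = ((T3.re : ℝ) : ℂ) := (Complex.conj_eq_iff_re.mp hT3real).symm
    -- bound on sum of normSq C
    have hCbound : ∑ j, ∑ l, Complex.normSq (C j l) ≤ 1/2 * Sx := by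
      have hcol : ∀ l, 2 * (∑ j, Complex.normSq (C j l)) ≤ ∑ i, Complex.normSq (x (i, l)) := by
        intro l
        set W : Matrix (Fin k) (Fin k) ℂ := Matrix.of (fun j i => conj' (v (i, j))) with hW
        have hWanti : ∀ i j, W j i = -W i j := by
          intro i j
          show conj' (v (i, j)) = -conj' (v (j, i))
          have : v (i, j) = -v (j, i) := by
            have := hvanti (j, i)
            simpa using this
          rw [this, map_neg]
        have hWsum : (∑ j, ∑ i, Complex.normSq (W j i)) = 1 := by
          calc ∑ j, ∑ i, Complex.normSq (W j i)
              = ∑ j, ∑ i, Complex.normSq (v (i, j)) := by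
                apply Finset.sum_congr rfl; intro j _
                apply Finset.sum_congr rfl; intro i _
                exact Complex.normSq_conj _
            _ = ∑ i, ∑ j, Complex.normSq (v (i, j)) := Finset.sum_comm
            _ = ∑ p : Fin k × Fin k, Complex.normSq (v p) := by rw [Fintype.sum_prod_type]
            _ = 1 := hv
        have hmv : ∀ j, (W.mulVec (fun i => x (i, l))) j = C j l := by
          intro j
          rw [Matrix.mulVec, dotProduct, hC]
          rfl
        have := PPTaux_key W hWanti (fun i => x (i, l))
        rw [hWsum, one_mul] at this
        rw [show (∑ j, Complex.normSq (C j l))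
          = ∑ j, Complex.normSq ((W.mulVec fun i => x (i, l)) j) from
          Finset.sum_congr rfl fun j _ => by rw [hmv j]]
        exact this
      have hsum2 : ∑ j, ∑ l, Complex.normSq (C j l) = ∑ l, ∑ j, Complex.normSq (C j l) :=
        Finset.sum_comm
      have hSx2 : Sx = ∑ l, ∑ i, Complex.normSq (x (i, l)) := by
        rw [hSx]
        rw [Fintype.sum_prod_type]
        exact Finset.sum_comm
      rw [hsum2, hSx2]
      have : ∑ l, 2 * (∑ j, Complex.normSq (C j l)) ≤ ∑ l, ∑ i, Complex.normSq (x (i, l)) :=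
        Finset.sum_le_sum fun l _ => hcol l
      rw [← Finset.mul_sum] at this
      linarith
    -- lower bound on T3.re
    have hT3low : -(1/2 * Sx) ≤ T3.re := by
      rw [hT3, Complex.re_sum]
      have hre : ∀ j, ((∑ l, conj' (C l j) * C j l).re)
          = ∑ l, (conj' (C l j) * C j l).re := fun j => Complex.re_sum _ _
      rw [Finset.sum_congr rfl fun j _ => hre j]
      have hbd : ∀ j l, -((Complex.normSq (C l j) + Complex.normSq (C j l)) / 2)
          ≤ (conj' (C l j) * C j l).re := fun j l => PPTaux_re_cross_bound _ _
      have hsum : ∑ j, ∑ l, -((Complex.normSq (C l j) + Complex.normSq (C j l)) / 2)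
          = -∑ j, ∑ l, Complex.normSq (C j l) := by
        have hsw : ∑ j, ∑ l, Complex.normSq (C l j) = ∑ j, ∑ l, Complex.normSq (C j l) :=
          Finset.sum_comm
        calc ∑ j, ∑ l, -((Complex.normSq (C l j) + Complex.normSq (C j l)) / 2)
            = ∑ j, ((-(1/2)) * (∑ l, Complex.normSq (C l j))
                + (-(1/2)) * ∑ l, Complex.normSq (C j l)) := by
              apply Finset.sum_congr rfl; intro j _
              rw [Finset.mul_sum, Finset.mul_sum, ← Finset.sum_add_distrib]
              apply Finset.sum_congr rfl; intro l _; ring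
          _ = (-(1/2)) * (∑ j, ∑ l, Complex.normSq (C l j))
                + (-(1/2)) * ∑ j, ∑ l, Complex.normSq (C j l) := by
              rw [Finset.sum_add_distrib, ← Finset.mul_sum, ← Finset.mul_sum]
          _ = -∑ j, ∑ l, Complex.normSq (C j l) := by rw [hsw]; ring
      have : -∑ j, ∑ l, Complex.normSq (C j l)
          ≤ ∑ j, ∑ l, (conj' (C l j) * C j l).re := by
        rw [← hsum]
        apply Finset.sum_le_sum
        intro j _
        apply Finset.sum_le_sum
        intro l _
        exact hbd j l
      linarith
    -- now assemble
    rw [h1, PPTaux_vecMulVec_quadform, hT3re]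
    set t := Complex.normSq (star w ⬝ᵥ x) with ht
    have htnn : 0 ≤ t := Complex.normSq_nonneg _
    have hkey : (0:ℝ) ≤ 1/2 * Sx + 1/2 * t + ε * T3.re := by
      nlinarith [mul_le_mul_of_nonneg_left hT3low hε0,
        mul_nonneg (sub_nonneg.mpr hε) hSxnn]
    have hcast : (1/2 : ℂ) * (Sx : ℂ) + (1/2 : ℂ) * ((t : ℝ) : ℂ)
        + (ε : ℂ) * ((T3.re : ℝ) : ℂ)
        = (((1/2 * Sx + 1/2 * t + ε * T3.re : ℝ)) : ℂ) := by
      push_cast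
      ring
    rw [hcast]
    exact_mod_cast hkey
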